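/- Fix n ≥ 3 and 4 ≤ t ≤ n, and let N be the Leibniz superalgebra H(0,…,0,β_t,0,…,0,0,0) with β_t = 1 (only the t-th parameter nonzero). Define d on N by d(e₁)=2e₁, d(e₂)=2(t-2)e₂, d(e_i)=2(i-1)e_i (3≤i≤n), d(y_i)=(2i-1)y_i (1≤i≤n). Then d is a non-nilpotent even derivation of N, and every even derivation d' of N satisfies d'(e₂) = 2(t-2)a₁ e₂ where 2a₁ is the coefficient of e₁ in d'(e₁). -/

import Mathlib

/-- For N = H(0,…,0,β_t = 1,0,…,0,0,0) (4 ≤ t ≤ n): the map d given by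
d(e₁)=2e₁, d(e₂)=2(t-2)e₂, d(e_i)=2(i-1)e_i, d(y_i)=(2i-1)y_i is a non-nilpotent
even derivation, and every even derivation d' satisfies d'(e₂) = 2(t-2)a₁e₂ where
2a₁ is the coefficient of e₁ in d'(e₁). -/
theorem statement19 {V : Type*} [AddCommGroup V] [Module ℂ V]
    (n t : ℕ) (hn : 3 ≤ n) (ht1 : 4 ≤ t) (ht2 : t ≤ n)
    (bas : Module.Basis (Fin n ⊕ Fin n) ℂ V)
    (eN yN : ℕ → V)
    (heN : ∀ k (h : 1 ≤ k ∧ k ≤ n), eN k = bas (Sum.inl ⟨k - 1, by omega⟩))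
    (heN0 : ∀ k, ¬(1 ≤ k ∧ k ≤ n) → eN k = 0)
    (hyN : ∀ k (h : 1 ≤ k ∧ k ≤ n), yN k = bas (Sum.inr ⟨k - 1, by omega⟩))
    (hyN0 : ∀ k, ¬(1 ≤ k ∧ k ≤ n) → yN k = 0)
    (br : V →ₗ[ℂ] V →ₗ[ℂ] V)
    -- multiplication table of N:
    (hee1 : ∀ i, 1 ≤ i → i ≤ n →
      br (eN i) (eN 1) = if i = 1 then eN 3 else if i = 2 then 0 else eN (i + 1))
    (hee2 : ∀ i, 1 ≤ i → i ≤ n →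
      br (eN i) (eN 2) = if i = 1 then eN t else if i = 2 then 0 else eN (i + t - 2))
    (hee0 : ∀ i j, 1 ≤ i → i ≤ n → 3 ≤ j → j ≤ n → br (eN i) (eN j) = 0)
    (hye1 : ∀ j, 1 ≤ j → j ≤ n → br (yN j) (eN 1) = yN (j + 1))
    (hye2 : ∀ j, 1 ≤ j → j ≤ n →
      br (yN j) (eN 2) = if j = 1 then yN (t - 1) else yN (j + t - 2))
    (hye0 : ∀ j i, 1 ≤ j → j ≤ n → 3 ≤ i → i ≤ n → br (yN j) (eN i) = 0)
    (hey1 : ∀ i, 1 ≤ i → i ≤ n → br (eN i) (yN 1) =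
      if i = 1 then (1 / 2 : ℂ) • yN 2 else if i = 2 then 0 else (1 / 2 : ℂ) • yN i)
    (hey0 : ∀ i j, 1 ≤ i → i ≤ n → 2 ≤ j → j ≤ n → br (eN i) (yN j) = 0)
    (hyy1 : ∀ j, 1 ≤ j → j ≤ n →
      br (yN j) (yN 1) = if j = 1 then eN 1 else eN (j + 1))
    (hyy0 : ∀ j k, 1 ≤ j → j ≤ n → 2 ≤ k → k ≤ n → br (yN j) (yN k) = 0)
    -- the map d:
    (d : Module.End ℂ V)
    (hde1 : d (eN 1) = (2 : ℂ) • eN 1)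
    (hde2 : d (eN 2) = (2 * ((t : ℂ) - 2)) • eN 2)
    (hde : ∀ i, 3 ≤ i → i ≤ n → d (eN i) = (2 * ((i : ℂ) - 1)) • eN i)
    (hdy : ∀ i, 1 ≤ i → i ≤ n → d (yN i) = (2 * (i : ℂ) - 1) • yN i) :
    -- d is a non-nilpotent even derivation of N:
    (∀ u v : V, d (br u v) = br (d u) v + br u (d v)) ∧
    (¬ ∃ k : ℕ, d ^ k = 0) ∧
    -- every even derivation d' of N satisfies d'(e₂) = 2(t-2)a₁e₂:
    (∀ d' : Module.End ℂ V,
      (∀ x ∈ Submodule.span ℂ (Set.range fun i : Fin n => bas (Sum.inl i)),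
        d' x ∈ Submodule.span ℂ (Set.range fun i : Fin n => bas (Sum.inl i))) →
      (∀ x ∈ Submodule.span ℂ (Set.range fun j : Fin n => bas (Sum.inr j)),
        d' x ∈ Submodule.span ℂ (Set.range fun j : Fin n => bas (Sum.inr j))) →
      (∀ u v : V, d' (br u v) = br (d' u) v + br u (d' v)) →
      ∃ a1 : ℂ, bas.repr (d' (eN 1)) (Sum.inl ⟨0, by omega⟩) = 2 * a1 ∧
        d' (eN 2) = (2 * ((t : ℂ) - 2) * a1) • eN 2) := by
  refine ⟨?_, ?_, ?_⟩
  · set S : ℕ → ℂ := fun a => if a = 1 then 2 else if a = 2 then 2*((t:ℂ)-2) else 2*((a:ℂ)-1) with hS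
    have hdS : ∀ a : ℕ, 1 ≤ a → d (eN a) = S a • eN a := by
      intro a ha
      by_cases h : a ≤ n
      · rcases (by omega : a = 1 ∨ a = 2 ∨ 3 ≤ a) with rfl | rfl | h3
        · simpa [hS] using hde1
        · simpa [hS] using hde2
        · rw [hde a h3 h]; simp [hS, show a ≠ 1 by omega, show a ≠ 2 by omega]
      · rw [heN0 a (by omega)]; simp
    have hdT : ∀ a : ℕ, 1 ≤ a → d (yN a) = (2*(a:ℂ)-1) • yN a := by
      intro a ha
      by_cases h : a ≤ n
      · exact hdy a ha h
      · rw [hyN0 a (by omega)]; simp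
    have hEE : ∀ a b : ℕ, 1 ≤ a → a ≤ n → 1 ≤ b → b ≤ n →
        d (br (eN a) (eN b)) = br (d (eN a)) (eN b) + br (eN a) (d (eN b)) := by
      intro a b ha1 ha2 hb1 hb2
      rw [hdS a ha1, hdS b hb1, map_smul, LinearMap.smul_apply, map_smul]
      rcases (by omega : b = 1 ∨ b = 2 ∨ 3 ≤ b) with rfl | rfl | hb3
      · rw [hee1 a ha1 ha2]
        rcases (by omega : a = 1 ∨ a = 2 ∨ 3 ≤ a) with rfl | rfl | ha3
        · rw [if_pos rfl]
          rw [hdS 3 (by omega), ← add_smul]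
          congr 1
          simp [hS]; norm_num
        · simp
        · simp only [show a ≠ 1 by omega, show a ≠ 2 by omega, if_false]
          rw [hdS (a+1) (by omega), ← add_smul]
          congr 1
          simp [hS, show a ≠ 1 by omega, show a ≠ 2 by omega, show a + 1 ≠ 1 by omega,
            show a + 1 ≠ 2 by omega, show a ≠ 0 by omega]
          push_cast; ring
      · rw [hee2 a ha1 ha2]
        rcases (by omega : a = 1 ∨ a = 2 ∨ 3 ≤ a) with rfl | rfl | ha3
        · rw [if_pos rfl]
          rw [hdS t (by omega), ← add_smul]
          congr 1
          simp [hS, show t ≠ 1 by omega, show t ≠ 2 by omega]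
          ring
        · simp
        · simp only [show a ≠ 1 by omega, show a ≠ 2 by omega, if_false]
          rw [hdS (a+t-2) (by omega), ← add_smul]
          congr 1
          simp [hS, show a ≠ 1 by omega, show a ≠ 2 by omega, show a + t - 2 ≠ 1 by omega,
            show a + t - 2 ≠ 2 by omega]
          rw [Nat.cast_sub (by omega)]
          push_cast; ring
      · rw [hee0 a b ha1 ha2 hb3 hb2]; simp
    have hYE : ∀ a b : ℕ, 1 ≤ a → a ≤ n → 1 ≤ b → b ≤ n →
        d (br (yN a) (eN b)) = br (d (yN a)) (eN b) + br (yN a) (d (eN b)) := by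
      intro a b ha1 ha2 hb1 hb2
      rw [hdT a ha1, hdS b hb1, map_smul, LinearMap.smul_apply, map_smul]
      rcases (by omega : b = 1 ∨ b = 2 ∨ 3 ≤ b) with rfl | rfl | hb3
      · rw [hye1 a ha1 ha2, hdT (a+1) (by omega), ← add_smul]
        congr 1
        simp [hS]; push_cast; ring
      · rw [hye2 a ha1 ha2]
        rcases (by omega : a = 1 ∨ 2 ≤ a) with rfl | ha3
        · rw [if_pos rfl]
          rw [hdT (t-1) (by omega), ← add_smul]
          congr 1
          simp [hS, show t ≠ 1 by omega, show t ≠ 2 by omega]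
          rw [Nat.cast_sub (by omega)]
          push_cast; ring
        · simp only [show a ≠ 1 by omega, if_false]
          rw [hdT (a+t-2) (by omega), ← add_smul]
          congr 1
          simp [hS, show t ≠ 1 by omega, show t ≠ 2 by omega]
          rw [Nat.cast_sub (by omega)]
          push_cast; ring
      · rw [hye0 a b ha1 ha2 hb3 hb2]; simp
    have hEY : ∀ a b : ℕ, 1 ≤ a → a ≤ n → 1 ≤ b → b ≤ n →
        d (br (eN a) (yN b)) = br (d (eN a)) (yN b) + br (eN a) (d (yN b)) := by
      intro a b ha1 ha2 hb1 hb2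
      rw [hdS a ha1, hdT b hb1, map_smul, LinearMap.smul_apply, map_smul]
      rcases (by omega : b = 1 ∨ 2 ≤ b) with rfl | hb3
      · rw [hey1 a ha1 ha2]
        rcases (by omega : a = 1 ∨ a = 2 ∨ 3 ≤ a) with rfl | rfl | ha3
        · rw [if_pos rfl]
          rw [map_smul, hdT 2 (by omega)]
          simp [hS]
          module
        · simp
        · simp only [show a ≠ 1 by omega, show a ≠ 2 by omega, if_false]
          rw [map_smul, hdT a (by omega)]
          simp only [hS, show a ≠ 1 by omega, show a ≠ 2 by omega, if_false]
          rw [smul_smul, smul_smul, smul_smul, ← add_smul]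
          congr 1
          norm_num; ring
      · rw [hey0 a b ha1 ha2 hb3 hb2]; simp
    have hYY : ∀ a b : ℕ, 1 ≤ a → a ≤ n → 1 ≤ b → b ≤ n →
        d (br (yN a) (yN b)) = br (d (yN a)) (yN b) + br (yN a) (d (yN b)) := by
      intro a b ha1 ha2 hb1 hb2
      rw [hdT a ha1, hdT b hb1, map_smul, LinearMap.smul_apply, map_smul]
      rcases (by omega : b = 1 ∨ 2 ≤ b) with rfl | hb3
      · rw [hyy1 a ha1 ha2]
        rcases (by omega : a = 1 ∨ 2 ≤ a) with rfl | ha3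
        · rw [if_pos rfl]
          rw [hdS 1 (by omega), ← add_smul]
          congr 1
          simp [hS]; norm_num
        · simp only [show a ≠ 1 by omega, if_false]
          rw [hdS (a+1) (by omega), ← add_smul]
          congr 1
          simp [hS, show a + 1 ≠ 1 by omega, show a + 1 ≠ 2 by omega, show a ≠ 0 by omega]
          push_cast; ring
      · rw [hyy0 a b ha1 ha2 hb3 hb2]; simp
    -- assemble via bilinearity
    have hbe : ∀ p : Fin n, bas (Sum.inl p) = eN (p.1 + 1) := by
      intro p
      rw [heN (p.1+1) ⟨by omega, by omega⟩]
      congr 1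
    have hby : ∀ p : Fin n, bas (Sum.inr p) = yN (p.1 + 1) := by
      intro p
      rw [hyN (p.1+1) ⟨by omega, by omega⟩]
      congr 1
    have key : br.compr₂ d = (br ∘ₗ d) + br.compl₂ d := by
      refine bas.ext fun i => bas.ext fun j => ?_
      simp only [LinearMap.compr₂_apply, LinearMap.compl₂_apply, LinearMap.add_apply,
        LinearMap.comp_apply]
      rcases i with p | p <;> rcases j with q | q
      · rw [hbe p, hbe q]; exact hEE _ _ (by omega) (by omega) (by omega) (by omega)
      · rw [hbe p, hby q]; exact hEY _ _ (by omega) (by omega) (by omega) (by omega)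
      · rw [hby p, hbe q]; exact hYE _ _ (by omega) (by omega) (by omega) (by omega)
      · rw [hby p, hby q]; exact hYY _ _ (by omega) (by omega) (by omega) (by omega)
    intro u v
    exact LinearMap.congr_fun (LinearMap.congr_fun key u) v
  · rintro ⟨k, hk⟩
    have h1 : ∀ m : ℕ, (d ^ m) (eN 1) = ((2:ℂ) ^ m) • eN 1 := by
      intro m
      induction m with
      | zero => simp
      | succ m ih =>
        rw [pow_succ, Module.End.mul_apply, hde1, map_smul, ih, smul_smul]
        congr 1
        ring
    have he : eN 1 ≠ 0 := by
      rw [heN 1 ⟨by omega, by omega⟩]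
      exact bas.ne_zero _
    have h2 : ((2:ℂ) ^ k) ≠ 0 := pow_ne_zero _ two_ne_zero
    have h3 := h1 k
    rw [hk, LinearMap.zero_apply] at h3
    rcases smul_eq_zero.mp h3.symm with h | h
    · exact h2 h
    · exact he h
  · intro d' hE hO hD
    have hbe : ∀ p : Fin n, bas (Sum.inl p) = eN (p.1 + 1) := by
      intro p
      rw [heN (p.1+1) ⟨by omega, by omega⟩]
      congr 1
    have hby : ∀ p : Fin n, bas (Sum.inr p) = yN (p.1 + 1) := by
      intro p
      rw [hyN (p.1+1) ⟨by omega, by omega⟩]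
      congr 1
    -- repr of basis-type vectors
    have hre : ∀ (m : ℕ) (i : Fin n), bas.repr (eN m) (Sum.inl i) = if m = i.1 + 1 then 1 else 0 := by
      intro m i
      by_cases h : 1 ≤ m ∧ m ≤ n
      · rw [heN m h, bas.repr_self, Finsupp.single_apply]
        by_cases hm : m = i.1 + 1
        · rw [if_pos (by simp [Fin.ext_iff]; omega), if_pos hm]
        · rw [if_neg (by simp [Fin.ext_iff]; omega), if_neg hm]
      · rw [heN0 m h, map_zero]
        have : m ≠ i.1 + 1 := by have := i.2; omega
        simp [this]
    have hre' : ∀ (m : ℕ) (j : Fin n), bas.repr (eN m) (Sum.inr j) = 0 := by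
      intro m j
      by_cases h : 1 ≤ m ∧ m ≤ n
      · rw [heN m h, bas.repr_self, Finsupp.single_apply, if_neg (by simp)]
      · rw [heN0 m h, map_zero]; simp
    have hry : ∀ (m : ℕ) (j : Fin n), bas.repr (yN m) (Sum.inr j) = if m = j.1 + 1 then 1 else 0 := by
      intro m j
      by_cases h : 1 ≤ m ∧ m ≤ n
      · rw [hyN m h, bas.repr_self, Finsupp.single_apply]
        by_cases hm : m = j.1 + 1
        · rw [if_pos (by simp [Fin.ext_iff]; omega), if_pos hm]
        · rw [if_neg (by simp [Fin.ext_iff]; omega), if_neg hm]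
      · rw [hyN0 m h, map_zero]
        have : m ≠ j.1 + 1 := by have := j.2; omega
        simp [this]
    -- vanishing of opposite-parity coefficients
    have evenRepr : ∀ x ∈ Submodule.span ℂ (Set.range fun i : Fin n => bas (Sum.inl i)),
        ∀ j : Fin n, bas.repr x (Sum.inr j) = 0 := by
      intro x hx j
      have hle : Submodule.span ℂ (Set.range fun i : Fin n => bas (Sum.inl i)) ≤
          LinearMap.ker ((Finsupp.lapply (Sum.inr j : Fin n ⊕ Fin n)) ∘ₗ
            (bas.repr : V →ₗ[ℂ] (Fin n ⊕ Fin n →₀ ℂ))) := by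
        rw [Submodule.span_le]
        rintro _ ⟨i, rfl⟩
        simp [LinearMap.mem_ker, bas.repr_self, Finsupp.single_apply]
      simpa using hle hx
    have oddRepr : ∀ x ∈ Submodule.span ℂ (Set.range fun j : Fin n => bas (Sum.inr j)),
        ∀ i : Fin n, bas.repr x (Sum.inl i) = 0 := by
      intro x hx i
      have hle : Submodule.span ℂ (Set.range fun j : Fin n => bas (Sum.inr j)) ≤
          LinearMap.ker ((Finsupp.lapply (Sum.inl i : Fin n ⊕ Fin n)) ∘ₗ
            (bas.repr : V →ₗ[ℂ] (Fin n ⊕ Fin n →₀ ℂ))) := by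
        rw [Submodule.span_le]
        rintro _ ⟨j, rfl⟩
        simp [LinearMap.mem_ker, bas.repr_self, Finsupp.single_apply]
      simpa using hle hx
    -- expansions
    have expand : ∀ x : V, x = ∑ i : Fin n, bas.repr x (Sum.inl i) • eN (i.1+1)
        + ∑ j : Fin n, bas.repr x (Sum.inr j) • yN (j.1+1) := by
      intro x
      conv_lhs => rw [← bas.sum_repr x]
      rw [Fintype.sum_sum_type]
      congr 1
      · exact Finset.sum_congr rfl fun i _ => by rw [hbe]
      · exact Finset.sum_congr rfl fun j _ => by rw [hby]
    have expandE : ∀ x ∈ Submodule.span ℂ (Set.range fun i : Fin n => bas (Sum.inl i)),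
        x = ∑ i : Fin n, bas.repr x (Sum.inl i) • eN (i.1+1) := by
      intro x hx
      have h2 : ∑ j : Fin n, bas.repr x (Sum.inr j) • yN (j.1+1) = 0 :=
        Finset.sum_eq_zero fun j _ => by rw [evenRepr x hx j, zero_smul]
      conv_lhs => rw [expand x]
      rw [h2, add_zero]
    have expandY : ∀ x ∈ Submodule.span ℂ (Set.range fun j : Fin n => bas (Sum.inr j)),
        x = ∑ j : Fin n, bas.repr x (Sum.inr j) • yN (j.1+1) := by
      intro x hx
      have h2 : ∑ i : Fin n, bas.repr x (Sum.inl i) • eN (i.1+1) = 0 :=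
        Finset.sum_eq_zero fun i _ => by rw [oddRepr x hx i, zero_smul]
      conv_lhs => rw [expand x]
      rw [h2, zero_add]
    -- memberships
    have hemem : ∀ k, 1 ≤ k → k ≤ n →
        eN k ∈ Submodule.span ℂ (Set.range fun i : Fin n => bas (Sum.inl i)) := by
      intro k h1 h2
      rw [heN k ⟨h1, h2⟩]
      exact Submodule.subset_span ⟨⟨k-1, by omega⟩, rfl⟩
    have hymem : ∀ k, 1 ≤ k → k ≤ n →
        yN k ∈ Submodule.span ℂ (Set.range fun j : Fin n => bas (Sum.inr j)) := by
      intro k h1 h2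
      rw [hyN k ⟨h1, h2⟩]
      exact Submodule.subset_span ⟨⟨k-1, by omega⟩, rfl⟩
    -- expansions of d' values
    have hDe1 : d' (eN 1) = ∑ i : Fin n, bas.repr (d' (eN 1)) (Sum.inl i) • eN (i.1+1) :=
      expandE _ (hE _ (hemem 1 (by omega) (by omega)))
    have hDe2exp : d' (eN 2) = ∑ i : Fin n, bas.repr (d' (eN 2)) (Sum.inl i) • eN (i.1+1) :=
      expandE _ (hE _ (hemem 2 (by omega) (by omega)))
    have hDy : ∀ k, 1 ≤ k → k ≤ n →
        d' (yN k) = ∑ j : Fin n, bas.repr (d' (yN k)) (Sum.inr j) • yN (j.1+1) :=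
      fun k h1 h2 => expandY _ (hO _ (hymem k h1 h2))
    -- bilinear sum helpers
    have brSumL : ∀ (c : Fin n → ℂ) (v : Fin n → V) (u : V) (pos : Fin n ⊕ Fin n),
        bas.repr (br (∑ i : Fin n, c i • v i) u) pos
          = ∑ i : Fin n, c i * bas.repr (br (v i) u) pos := by
      intro c v u pos
      rw [map_sum, LinearMap.sum_apply, map_sum, Finsupp.finset_sum_apply]
      refine Finset.sum_congr rfl fun i _ => ?_
      rw [map_smul, LinearMap.smul_apply, map_smul, Finsupp.smul_apply, smul_eq_mul]
    have brSumR : ∀ (c : Fin n → ℂ) (v : Fin n → V) (u : V) (pos : Fin n ⊕ Fin n),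
        bas.repr (br u (∑ i : Fin n, c i • v i)) pos
          = ∑ i : Fin n, c i * bas.repr (br u (v i)) pos := by
      intro c v u pos
      rw [map_sum, map_sum, Finsupp.finset_sum_apply]
      refine Finset.sum_congr rfl fun i _ => ?_
      rw [map_smul, map_smul, Finsupp.smul_apply, smul_eq_mul]
    set A0 : ℂ := bas.repr (d' (eN 1)) (Sum.inl ⟨0, by omega⟩) with hA0
    set C0 : ℂ := bas.repr (d' (yN 1)) (Sum.inr ⟨0, by omega⟩) with hC0
    -- the shift step
    have step : ∀ k : ℕ, 1 ≤ k → k + 1 ≤ n → ∀ (h1 : k < n) (h0 : k - 1 < n),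
        bas.repr (d' (yN (k+1))) (Sum.inr ⟨k, h1⟩) =
          bas.repr (d' (yN k)) (Sum.inr ⟨k-1, h0⟩) + A0 := by
      intro k hk1 hk2 h1 h0
      have hrel : d' (yN (k+1)) = br (d' (yN k)) (eN 1) + br (yN k) (d' (eN 1)) := by
        rw [← hye1 k (by omega) (by omega), hD]
      rw [hrel, map_add, Finsupp.add_apply]
      congr 1
      · -- first term
        conv_lhs => rw [hDy k (by omega) (by omega), brSumL]
        rw [Finset.sum_eq_single (⟨k-1, h0⟩ : Fin n)]
        · rw [hye1 (k-1+1) (by omega) (by omega), hry]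
          rw [if_pos (by simp only [Fin.val_mk]; omega), mul_one]
        · intro j _ hj
          rw [hye1 (j.1+1) (by omega) (by omega), hry]
          have hj' : j.1 ≠ k - 1 := fun hh => hj (Fin.ext hh)
          rw [if_neg (by simp only [Fin.val_mk]; omega), mul_zero]
        · intro h; exact absurd (Finset.mem_univ _) h
      · -- second term
        conv_lhs => rw [hDe1, brSumR]
        rw [Finset.sum_eq_single (⟨0, by omega⟩ : Fin n)]
        · rw [hye1 k (by omega) (by omega), hry, if_pos rfl, mul_one]
        · intro i _ hi
          have hi1 : 1 ≤ i.1 := by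
            rcases Nat.eq_zero_or_pos i.1 with h | h
            · exact absurd (Fin.ext h) hi
            · omega
          rcases (by omega : i.1 + 1 = 2 ∨ 3 ≤ i.1 + 1) with h2 | h3
          · rw [h2, hye2 k (by omega) (by omega)]
            by_cases hk : k = 1
            · rw [if_pos hk, hry, if_neg (by simp only [Fin.val_mk]; omega), mul_zero]
            · rw [if_neg hk, hry, if_neg (by simp only [Fin.val_mk]; omega), mul_zero]
          · rw [hye0 k (i.1+1) (by omega) (by omega) h3 (by omega), map_zero,
              Finsupp.coe_zero, Pi.zero_apply, mul_zero]
        · intro h; exact absurd (Finset.mem_univ _) h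
    -- the chain
    have chain : ∀ k : ℕ, 1 ≤ k → k ≤ n → ∀ (h0 : k - 1 < n),
        bas.repr (d' (yN k)) (Sum.inr ⟨k-1, h0⟩) = C0 + ((k:ℂ) - 1) * A0 := by
      intro k
      induction k with
      | zero => intro h; omega
      | succ k ih =>
        intro _ hkn h0
        rcases Nat.eq_zero_or_pos k with rfl | hk
        · rw [hC0]; push_cast; ring_nf
        · have hstep := step k hk hkn (by omega) (by omega)
          simp only [Nat.add_sub_cancel] at h0 hstep ⊢
          rw [hstep, ih hk (by omega) (by omega)]
          push_cast; ring
    -- all coefficients of d'(e2) other than at e2 vanish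
    have hbrz : br (d' (eN 2)) (yN 1) = 0 := by
      have h0 : br (eN 2) (yN 1) = 0 := by
        rw [hey1 2 (by omega) (by omega)]; norm_num
      have h1 : br (eN 2) (d' (yN 1)) = 0 := by
        rw [hDy 1 (by omega) (by omega), map_sum]
        refine Finset.sum_eq_zero fun j _ => ?_
        rw [map_smul]
        rcases Nat.eq_zero_or_pos j.1 with hj | hj
        · rw [hj, hey1 2 (by omega) (by omega)]; norm_num
        · rw [hey0 2 (j.1+1) (by omega) (by omega) (by omega) (by omega), smul_zero]
      have := hD (eN 2) (yN 1)
      rw [h0, h1, map_zero, add_zero] at this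
      exact this.symm
    have claimB : ∀ i : Fin n, i ≠ ⟨1, by omega⟩ → bas.repr (d' (eN 2)) (Sum.inl i) = 0 := by
      intro i hi
      have hi' : i.1 ≠ 1 := fun h => hi (Fin.ext h)
      set p : Fin n := if i.1 = 0 then ⟨1, by omega⟩ else ⟨i.1, i.2⟩ with hp
      have hkey : bas.repr (br (d' (eN 2)) (yN 1)) (Sum.inr p) = 0 := by
        rw [hbrz]; simp
      conv at hkey => lhs; rw [hDe2exp, brSumL]
      rw [Finset.sum_eq_single i] at hkey
      · -- the i-th term equals (1/2) * B i
        rcases Nat.eq_zero_or_pos i.1 with h0 | h0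
        · rw [hey1 (i.1+1) (by omega) (by omega), if_pos (by omega)] at hkey
          rw [map_smul, Finsupp.smul_apply, hry] at hkey
          rw [if_pos (by simp [hp, h0]), smul_eq_mul, mul_one] at hkey
          have : (1/2 : ℂ) ≠ 0 := by norm_num
          field_simp at hkey
          simpa using hkey
        · rw [hey1 (i.1+1) (by omega) (by omega), if_neg (by omega), if_neg (by omega)] at hkey
          rw [map_smul, Finsupp.smul_apply, hry] at hkey
          rw [if_pos (by simp [hp, show i.1 ≠ 0 by omega]), smul_eq_mul, mul_one] at hkey
          field_simp at hkey
          simpa using hkey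
      · intro j _ hj
        have hj' : j.1 ≠ i.1 := fun h => hj (Fin.ext h)
        rcases (by omega : j.1 = 0 ∨ j.1 = 1 ∨ 2 ≤ j.1) with h0 | h0 | h0
        · -- j = 0 : term is (1/2) yN 2, position p has p.1 + 1 ≠ 2
          rw [hey1 (j.1+1) (by omega) (by omega), if_pos (by omega)]
          rw [map_smul, Finsupp.smul_apply, hry, if_neg ?_, smul_zero, mul_zero]
          have : i.1 ≠ 0 := by omega
          simp [hp, this]
          omega
        · rw [hey1 (j.1+1) (by omega) (by omega), if_neg (by omega), if_pos (by omega),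
            map_zero, Finsupp.coe_zero, Pi.zero_apply, mul_zero]
        · rw [hey1 (j.1+1) (by omega) (by omega), if_neg (by omega), if_neg (by omega)]
          rw [map_smul, Finsupp.smul_apply, hry, if_neg ?_, smul_zero, mul_zero]
          by_cases hc : i.1 = 0 <;> simp [hp, hc] <;> omega
      · intro h; exact absurd (Finset.mem_univ _) h
    set B1 : ℂ := bas.repr (d' (eN 2)) (Sum.inl ⟨1, by omega⟩) with hB1
    have hDe2 : d' (eN 2) = B1 • eN 2 := by
      conv_lhs => rw [hDe2exp]
      rw [Finset.sum_eq_single (⟨1, by omega⟩ : Fin n)]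
      · intro j _ hj
        rw [claimB j hj, zero_smul]
      · intro h; exact absurd (Finset.mem_univ _) h
    -- final relation at y_{t-1}
    have hrel2 : d' (yN (t-1)) = br (d' (yN 1)) (eN 2) + br (yN 1) (d' (eN 2)) := by
      have : br (yN 1) (eN 2) = yN (t-1) := by
        rw [hye2 1 (by omega) (by omega), if_pos rfl]
      rw [← this, hD]
    have hfin : C0 + (((t:ℂ) - 1) - 1) * A0 = C0 + B1 := by
      have hL : bas.repr (d' (yN (t-1))) (Sum.inr ⟨t-2, by omega⟩) = C0 + (((t:ℂ)-1) - 1) * A0 := by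
        have h := chain (t-1) (by omega) (by omega) (by omega)
        have hc : ((t-1 : ℕ) : ℂ) = (t:ℂ) - 1 := by
          rw [Nat.cast_sub (by omega)]; norm_num
        rw [hc] at h
        exact h
      rw [← hL, hrel2, map_add, Finsupp.add_apply]
      congr 1
      · -- first term equals C0
        conv_lhs => rw [hDy 1 (by omega) (by omega), brSumL]
        rw [Finset.sum_eq_single (⟨0, by omega⟩ : Fin n)]
        · rw [hye2 1 (by omega) (by omega), if_pos rfl, hry,
            if_pos (by simp only [Fin.val_mk]; omega), mul_one]
        · intro j _ hj
          have hj1 : 1 ≤ j.1 := by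
            rcases Nat.eq_zero_or_pos j.1 with h | h
            · exact absurd (Fin.ext h) hj
            · omega
          rw [hye2 (j.1+1) (by omega) (by omega), if_neg (by omega), hry,
            if_neg (by simp only [Fin.val_mk]; omega), mul_zero]
        · intro h; exact absurd (Finset.mem_univ _) h
      · rw [hDe2, map_smul, map_smul, Finsupp.smul_apply, hye2 1 (by omega) (by omega),
          if_pos rfl, hry, if_pos (by simp only [Fin.val_mk]; omega), smul_eq_mul, mul_one]
    have hB1val : B1 = ((t:ℂ) - 2) * A0 := by
      linear_combination -hfin
    refine ⟨A0 / 2, ?_, ?_⟩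
    · ring
    · rw [hDe2, hB1val]
      congr 1
      ring
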